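/- The inverse translation is deterministic: if t ⇐ A ⊣ Θ ⇝ M and t ⇐ A ⊣ Θ ⇝ M' are both derivable then M = M', and if t ⇒ A ⊣ Θ ⇝ M and t ⇒ A' ⊣ Θ ⇝ M' are both derivable then A = A' and M = M' (assuming Θ assigns at most one type to each constant/variable and Δ assigns at most one type to each meta-variable). -/

import Mathlib

/- De Bruijn presentation of LF: kinds, types, objects (with meta-variables). -/
mutual
inductive LTy : Type where
  | const : Nat → LTy
  | pi : LTy → LTy → LTy
  | app : LTy → LObj → LTy
inductive LObj : Type where
  | const : Nat → LObj
  | var : Nat → LObj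
  | mvar : Nat → LObj
  | app : LObj → LObj → LObj
  | lam : LTy → LObj → LObj
end

inductive LKind : Type where
  | type : LKind
  | pi : LTy → LKind → LKind

mutual
def liftTy (d : Nat) : LTy → LTy
  | .const a => .const a
  | .pi A B => .pi (liftTy d A) (liftTy (d+1) B)
  | .app A M => .app (liftTy d A) (liftObj d M)
def liftObj (d : Nat) : LObj → LObj
  | .const c => .const c
  | .var k => if k < d then .var k else .var (k+1)
  | .mvar X => .mvar X
  | .app M N => .app (liftObj d M) (liftObj d N)
  | .lam A M => .lam (liftTy d A) (liftObj (d+1) M)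
end

def liftKind (d : Nat) : LKind → LKind
  | .type => .type
  | .pi A K => .pi (liftTy d A) (liftKind (d+1) K)

/- Capture-avoiding substitution of an object for de Bruijn variable d. -/
mutual
def substTy (d : Nat) (s : LObj) : LTy → LTy
  | .const a => .const a
  | .pi A B => .pi (substTy d s A) (substTy (d+1) (liftObj 0 s) B)
  | .app A M => .app (substTy d s A) (substObj d s M)
def substObj (d : Nat) (s : LObj) : LObj → LObj
  | .const c => .const c
  | .var k => if k = d then s else if d < k then .var (k-1) else .var k
  | .mvar X => .mvar X
  | .app M N => .app (substObj d s M) (substObj d s N)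
  | .lam A M => .lam (substTy d s A) (substObj (d+1) (liftObj 0 s) M)
end

def substKind (d : Nat) (s : LObj) : LKind → LKind
  | .type => .type
  | .pi A K => .pi (substTy d s A) (substKind (d+1) (liftObj 0 s) K)

/- Context lookup with the appropriate lifting. -/
inductive Lk : List LTy → Nat → LTy → Prop where
  | zero : Lk (A :: Γ) 0 (liftTy 0 A)
  | succ : Lk Γ k A → Lk (B :: Γ) (k+1) (liftTy 0 A)

/- LF typing judgments, relative to a signature (ts for kinds of type constants,
   os for types of object constants) and a meta-variable context Δ. -/
mutual
inductive WfKind (ts : Nat → LKind) (os : Nat → LTy) (Δ : Nat → LTy) :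
    List LTy → LKind → Prop where
  | type : WfKind ts os Δ Γ .type
  | pi : HasKind ts os Δ Γ A .type → WfKind ts os Δ (A :: Γ) K →
      WfKind ts os Δ Γ (.pi A K)
inductive HasKind (ts : Nat → LKind) (os : Nat → LTy) (Δ : Nat → LTy) :
    List LTy → LTy → LKind → Prop where
  | const : HasKind ts os Δ Γ (.const a) (ts a)
  | pi : HasKind ts os Δ Γ A .type → HasKind ts os Δ (A :: Γ) B .type →
      HasKind ts os Δ Γ (.pi A B) .type
  | app : HasKind ts os Δ Γ A (.pi B K) → HasTy ts os Δ Γ M B →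
      HasKind ts os Δ Γ (.app A M) (substKind 0 M K)
inductive HasTy (ts : Nat → LKind) (os : Nat → LTy) (Δ : Nat → LTy) :
    List LTy → LObj → LTy → Prop where
  | const : HasTy ts os Δ Γ (.const c) (os c)
  | var : Lk Γ k A → HasTy ts os Δ Γ (.var k) A
  | mvar : HasTy ts os Δ Γ (.mvar X) (Δ X)
  | lam : HasKind ts os Δ Γ A .type → HasTy ts os Δ (A :: Γ) M B →
      HasTy ts os Δ Γ (.lam A M) (.pi A B)
  | app : HasTy ts os Δ Γ M (.pi A B) → HasTy ts os Δ Γ N A →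
      HasTy ts os Δ Γ (.app M N) (substTy 0 N B)
end
/- Simple types with the two atomic types lf-obj and lf-type. -/
inductive STy : Type where
  | lfObj : STy
  | lfType : STy
  | arr : STy → STy → STy

/- The flattening map φ on LF types (base types go to lf-obj). -/
def phiTy : LTy → STy
  | .const _ => .lfObj
  | .app _ _ => .lfObj
  | .pi A B => .arr (phiTy A) (phiTy B)

/- The flattening map φ on LF kinds. -/
def phiKind : LKind → STy
  | .type => .lfType
  | .pi A K => .arr (phiTy A) (phiKind K)

/- Simply typed λ-terms (hohh terms), with meta-variables. -/
inductive Tm : Type where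
  | const : Nat → Tm
  | var : Nat → Tm
  | mvar : Nat → Tm
  | app : Tm → Tm → Tm
  | lam : STy → Tm → Tm

def liftTm (d : Nat) : Tm → Tm
  | .const c => .const c
  | .var k => if k < d then .var k else .var (k+1)
  | .mvar X => .mvar X
  | .app m n => .app (liftTm d m) (liftTm d n)
  | .lam τ m => .lam τ (liftTm (d+1) m)

def substTm (d : Nat) (s : Tm) : Tm → Tm
  | .const c => .const c
  | .var k => if k = d then s else if d < k then .var (k-1) else .var k
  | .mvar X => .mvar X
  | .app m n => .app (substTm d s m) (substTm d s n)
  | .lam τ m => .lam τ (substTm (d+1) (liftTm 0 s) m)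

/- The lossy encoding ⟨·⟩ of LF objects as simply typed terms. -/
def enc : LObj → Tm
  | .const c => .const c
  | .var k => .var k
  | .mvar X => .mvar X
  | .app M N => .app (enc M) (enc N)
  | .lam A M => .lam (phiTy A) (enc M)

/- STLC typing, relative to a signature cs and meta-variable typing ms. -/
inductive SHas (cs : Nat → STy) (ms : Nat → STy) : List STy → Tm → STy → Prop where
  | const : SHas cs ms Γ (.const c) (cs c)
  | var : Γ[k]? = some τ → SHas cs ms Γ (.var k) τ
  | mvar : SHas cs ms Γ (.mvar X) (ms X)
  | app : SHas cs ms Γ m (.arr τ σ) → SHas cs ms Γ n τ → SHas cs ms Γ (.app m n) σ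
  | lam : SHas cs ms (τ :: Γ) m σ → SHas cs ms Γ (.lam τ m) (.arr τ σ)

/- The inverse translation (Figure 5): mutually recursive synthesis (⇒) and
   checking (⇐) judgments, relative to object-constant types os, meta-variable
   types Δ, and a context Γ of variable types. -/
mutual
inductive Syn (os Δ : Nat → LTy) : List LTy → Tm → LTy → LObj → Prop where
  | mvar : Syn os Δ Γ (.mvar X) (Δ X) (.mvar X)
  | const : Syn os Δ Γ (.const c) (os c) (.const c)
  | var : Lk Γ k A → Syn os Δ Γ (.var k) A (.var k)
  | app : Syn os Δ Γ t (.pi B A) M₁ → Chk os Δ Γ u B M₂ →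
      Syn os Δ Γ (.app t u) (substTy 0 M₂ A) (.app M₁ M₂)
inductive Chk (os Δ : Nat → LTy) : List LTy → Tm → LTy → LObj → Prop where
  | abs : Chk os Δ (A :: Γ) t B M →
      Chk os Δ Γ (.lam (phiTy A) t) (.pi A B) (.lam A M)
  | syn : Syn os Δ Γ t A M → Chk os Δ Γ t A M
end



theorem Lk_det : ∀ {Γ k A A'}, Lk Γ k A → Lk Γ k A' → A = A' := by
  intro Γ k A A' h
  induction h generalizing A' with
  | zero => intro h'; cases h'; rfl
  | succ _ ih =>
    intro h'
    cases h' with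
    | succ h'' => rw [ih h'']

set_option maxHeartbeats 1000000 in
mutual
theorem chk_det {os Δ} : ∀ {Γ t A M M'}, Chk os Δ Γ t A M → Chk os Δ Γ t A M' → M = M' := by
  intro Γ t A M M' h h'
  cases h with
  | @abs A0 Γ0 t0 B0 M0 h1 =>
    generalize hs : Tm.lam (phiTy A0) t0 = s at h'
    cases h' with
    | abs h1' =>
      injection hs with _ ht
      subst ht
      rw [chk_det h1 h1']
    | syn hs2 => subst hs; cases hs2
  | syn hs =>
    cases h' with
    | abs _ => cases hs
    | syn hs' => exact (syn_det hs hs').2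
theorem syn_det {os Δ} : ∀ {Γ t A A' M M'}, Syn os Δ Γ t A M → Syn os Δ Γ t A' M' → A = A' ∧ M = M' := by
  intro Γ t A A' M M' h h'
  cases h with
  | mvar => cases h'; exact ⟨rfl, rfl⟩
  | const => cases h'; exact ⟨rfl, rfl⟩
  | var hk => cases h' with | var hk' => exact ⟨Lk_det hk hk', rfl⟩
  | app h1 h2 =>
    cases h' with
    | app h1' h2' =>
      obtain ⟨he, hm⟩ := syn_det h1 h1'
      cases he
      have := chk_det h2 h2'
      subst this
      exact ⟨rfl, by rw [hm]⟩
end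

/-- Determinism of the inverse translation (the typing information os, Δ, Γ
    assigns a unique type to each constant, variable and meta-variable, being
    given by functions/deterministic lookup): checking produces a unique object,
    and synthesis produces a unique type and object. -/
theorem inverse_translation_deterministic (os Δ : Nat → LTy) :
    (∀ (Γ : List LTy) (t : Tm) (A : LTy) (M M' : LObj),
       Chk os Δ Γ t A M → Chk os Δ Γ t A M' → M = M') ∧
    (∀ (Γ : List LTy) (t : Tm) (A A' : LTy) (M M' : LObj),
       Syn os Δ Γ t A M → Syn os Δ Γ t A' M' → A = A' ∧ M = M') := by
  exact ⟨fun _ _ _ _ _ => chk_det, fun _ _ _ _ _ _ => syn_det⟩
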